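/- The function f(w) = 2^{|w|} on strings over the unary alphabet {a} is computable by a (copyful) CRA over (ℕ, +) but is not computable by any copyless CRA over (ℕ, +), since any copyless CRA over (ℕ, +) computes a function whose values are bounded linearly in the input length. -/

import Mathlib

/-- A cost register automaton over the additive grammar `G(⊗)` for a commutative
monoid `(D, ⊗)` (written additively): a deterministic finite-state machine with
finitely many write-only registers, where each register is updated at each step to
a `⊗`-sum of registers (with multiplicities) and a constant. -/
structure AddCRA (σ D : Type*) where
  Q : Type*
  finQ : Fintype Q
  q0 : Q
  X : Type*
  finX : Fintype X
  δ : Q → σ → Q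
  /-- `ρ q a x = (coef, c)` means `x := (⊗_y coef y • y) ⊗ c`. -/
  ρ : Q → σ → X → (X → ℕ) × D
  μ : Q → Option ((X → ℕ) × D)

namespace AddCRA

variable {σ D : Type*} [AddCommMonoid D]

/-- Value of an update expression under a register valuation. -/
def evalE (M : AddCRA σ D) (ν : M.X → D) (e : (M.X → ℕ) × D) : D :=
  letI := M.finX
  (∑ x, e.1 x • ν x) + e.2

/-- One step of the machine on input symbol `a`. -/
def step (M : AddCRA σ D) (cfg : M.Q × (M.X → D)) (a : σ) : M.Q × (M.X → D) :=
  (M.δ cfg.1 a, fun x => M.evalE cfg.2 (M.ρ cfg.1 a x))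

/-- The configuration reached on input word `w`, registers initialized to `0`. -/
def run (M : AddCRA σ D) (w : List σ) : M.Q × (M.X → D) :=
  w.foldl M.step (M.q0, fun _ => 0)

/-- The (partial) output of the machine on input word `w`. -/
def output (M : AddCRA σ D) (w : List σ) : Option D :=
  (M.μ (M.run w).1).map (M.evalE (M.run w).2)

/-- A CRA is copyless if in each transition every register appears at most once
across all right-hand sides of register updates, and at most once in each output
expression. -/
def Copyless (M : AddCRA σ D) : Prop :=
  (∀ q a (x : M.X), (letI := M.finX; ∑ y, (M.ρ q a y).1 x) ≤ 1) ∧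
  (∀ q e, M.μ q = some e → ∀ x, e.1 x ≤ 1)

end AddCRA

/-- The doubling CRA. -/
def doubleCRA.{u, v} : AddCRA Unit ℕ where
  Q := PUnit.{u + 1}
  finQ := inferInstance
  q0 := PUnit.unit
  X := PUnit.{v + 1}
  finX := inferInstance
  δ := fun _ _ => PUnit.unit
  ρ := fun _ _ _ => (fun _ => 2, 1)
  μ := fun _ => some (fun _ => 1, 1)

lemma doubleCRA_foldl.{u, v} (w : List Unit) (ν : PUnit.{v + 1} → ℕ) :
    (w.foldl doubleCRA.{u, v}.step (PUnit.unit, ν)).2 PUnit.unit + 1 =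
      2 ^ w.length * (ν PUnit.unit + 1) := by
  induction w generalizing ν with
  | nil => simp
  | cons a w ih =>
    rw [List.foldl_cons]
    have : doubleCRA.{u, v}.step (PUnit.unit, ν) a =
        (PUnit.unit, fun _ => 2 * ν PUnit.unit + 1) := by
      simp [AddCRA.step, AddCRA.evalE, doubleCRA]
      rfl
    rw [this]; erw [ih]
    simp only [List.length_cons, pow_succ]
    ring

lemma doubleCRA_output.{u, v} (w : List Unit) :
    doubleCRA.{u, v}.output w = some (2 ^ w.length) := by
  have h := doubleCRA_foldl.{u, v} w (fun _ => 0)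
  simp only [AddCRA.output, AddCRA.run, doubleCRA, Option.map_some, AddCRA.evalE]
  simp only [doubleCRA] at h
  simp only [Fintype.sum_unique, one_smul]
  congr 1
  simpa using h

lemma sq_le_two_pow : ∀ n : ℕ, 4 ≤ n → n * n ≤ 2 ^ n := by
  intro n hn
  induction n with
  | zero => omega
  | succ m ih =>
    rcases Nat.lt_or_ge m 4 with hm | hm
    · interval_cases m <;> omega
    · have h := ih hm
      have : 2 ^ (m + 1) = 2 ^ m + 2 ^ m := by ring
      nlinarith

lemma exists_exp_gt (a b : ℕ) : ∃ n : ℕ, a * n + b < 2 ^ n := by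
  refine ⟨a + b + 4, ?_⟩
  have h4 : 4 ≤ a + b + 4 := by omega
  have h := sq_le_two_pow (a + b + 4) h4
  nlinarith

section Bound

variable (M : AddCRA Unit ℕ)

/-- Sum of registers of a copyless CRA grows at most linearly. -/
lemma copyless_sum_bound (h : M.Copyless) :
    ∀ (w : List Unit) (q : M.Q) (ν : M.X → ℕ),
      (letI := M.finX;
        (∑ x, (w.foldl M.step (q, ν)).2 x) ≤ (∑ x, ν x) +
          (letI := M.finQ;
            Finset.univ.sup (fun q : M.Q => ∑ x, (M.ρ q () x).2)) * w.length) := by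
  letI := M.finX
  letI := M.finQ
  set A := Finset.univ.sup (fun q : M.Q => ∑ x, (M.ρ q () x).2) with hA
  intro w
  induction w with
  | nil => intro q ν; simp
  | cons a w ih =>
    intro q ν
    rw [List.foldl_cons]
    have hstep : M.step (q, ν) a = (M.δ q a, fun x => M.evalE ν (M.ρ q a x)) := rfl
    rw [hstep]
    refine le_trans (ih _ _) ?_
    have hν' : (∑ x, M.evalE ν (M.ρ q a x)) ≤ (∑ x, ν x) + A := by
      have : (∑ x, M.evalE ν (M.ρ q a x)) =
          (∑ x, ∑ y, (M.ρ q a x).1 y * ν y) + ∑ x, (M.ρ q a x).2 := by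
        simp [AddCRA.evalE, Finset.sum_add_distrib, smul_eq_mul]
      rw [this]
      have h1 : (∑ x, ∑ y, (M.ρ q a x).1 y * ν y) ≤ ∑ y, ν y := by
        rw [Finset.sum_comm]
        refine Finset.sum_le_sum fun y _ => ?_
        rw [← Finset.sum_mul]
        have := h.1 q a y
        calc (∑ x, (M.ρ q a x).1 y) * ν y ≤ 1 * ν y :=
              Nat.mul_le_mul_right _ this
          _ = ν y := one_mul _
      have h2 : (∑ x, (M.ρ q a x).2) ≤ A := by
        have : a = () := rfl
        rw [this]
        exact Finset.le_sup (f := fun q : M.Q => ∑ x, (M.ρ q () x).2)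
          (Finset.mem_univ q)
      omega
    calc (∑ x, M.evalE ν (M.ρ q a x)) + A * w.length
        ≤ ((∑ x, ν x) + A) + A * w.length := by omega
      _ = (∑ x, ν x) + A * (w.length + 1) := by ring
      _ = (∑ x, ν x) + A * (a :: w).length := by simp

lemma copyless_linear (h : M.Copyless) :
    ∃ a b : ℕ, ∀ (w : List Unit) (d : ℕ),
      M.output w = some d → d ≤ a * w.length + b := by
  letI := M.finX
  letI := M.finQ
  refine ⟨Finset.univ.sup (fun q : M.Q => ∑ x, (M.ρ q () x).2),
    Finset.univ.sup (fun q : M.Q => (M.μ q).elim 0 (fun e => e.2)), ?_⟩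
  intro w d hd
  set A := Finset.univ.sup (fun q : M.Q => ∑ x, (M.ρ q () x).2) with hA
  set B := Finset.univ.sup (fun q : M.Q => (M.μ q).elim 0 (fun e => e.2)) with hB
  obtain ⟨e, he, hde⟩ : ∃ e, M.μ (M.run w).1 = some e ∧
      d = M.evalE (M.run w).2 e := by
    unfold AddCRA.output at hd
    rcases h' : M.μ (M.run w).1 with _ | e
    · rw [h'] at hd; simp at hd
    · rw [h'] at hd; simp at hd; exact ⟨e, rfl, hd.symm⟩
  have hsum := copyless_sum_bound M h w M.q0 (fun _ => 0)
  simp only [← hA] at hsum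
  have hsum' : (∑ x, (M.run w).2 x) ≤ A * w.length := by
    simpa [AddCRA.run] using hsum
  have heval : M.evalE (M.run w).2 e ≤ (∑ x, (M.run w).2 x) + e.2 := by
    unfold AddCRA.evalE
    have : (∑ x, e.1 x • (M.run w).2 x) ≤ ∑ x, (M.run w).2 x := by
      refine Finset.sum_le_sum fun x _ => ?_
      have := h.2 _ e he x
      calc e.1 x • (M.run w).2 x = e.1 x * (M.run w).2 x := smul_eq_mul ..
        _ ≤ 1 * (M.run w).2 x := Nat.mul_le_mul_right _ this
        _ = (M.run w).2 x := one_mul _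
    omega
  have hb : e.2 ≤ B := by
    have := Finset.le_sup (f := fun q : M.Q => (M.μ q).elim 0 (fun e => e.2))
      (Finset.mem_univ (M.run w).1)
    simpa [he] using this
  omega

end Bound

/-- The function `f(w) = 2^{|w|}` over the unary alphabet is computable by a
(copyful) CRA over `(ℕ, +)`, but not by any copyless CRA over `(ℕ, +)`: indeed
every copyless CRA over `(ℕ, +)` computes a function whose values are bounded
linearly in the input length. -/
theorem two_pow_copyful_not_copyless :
    (∃ M : AddCRA Unit ℕ, ∀ w : List Unit, M.output w = some (2 ^ w.length)) ∧
    (∀ M : AddCRA Unit ℕ, M.Copyless →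
      ∃ a b : ℕ, ∀ (w : List Unit) (d : ℕ),
        M.output w = some d → d ≤ a * w.length + b) ∧
    (∀ M : AddCRA Unit ℕ, M.Copyless →
      ¬ ∀ w : List Unit, M.output w = some (2 ^ w.length)) := by
  refine ⟨⟨doubleCRA, doubleCRA_output⟩, fun M h => copyless_linear M h, ?_⟩
  intro M h hall
  obtain ⟨a, b, hab⟩ := copyless_linear M h
  obtain ⟨n, hn⟩ := exists_exp_gt a b
  have := hab (List.replicate n ()) (2 ^ n) (by simpa using hall (List.replicate n ()))
  simp at this
  omega
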